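/- Let Ψ, Ψ̃ ∈ K^{m×n}, let J ⊆ {1,…,n} be nonempty with |J| ≤ s, and assume θ_s(Ψ̃*Ψ) < 1. Then the smallest singular value of Ψ̃_J*Ψ_J is at least 1 − θ_s(Ψ̃*Ψ) > 0 (in particular Ψ̃_J*Ψ_J is invertible), and the oblique projector Ψ_J(Ψ̃_J*Ψ_J)^{-1}Ψ̃_J* ∈ K^{m×m} satisfies ‖Ψ_J(Ψ̃_J*Ψ_J)^{-1}Ψ̃_J*‖ ≤ ‖Ψ_J‖·‖Ψ̃_J‖ / (1 − θ_s(Ψ̃*Ψ)). -/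

import Mathlib

open scoped BigOperators
open Matrix MeasureTheory

noncomputable section

namespace ObliquePursuit

variable {𝕜 : Type*} [RCLike 𝕜]

/-- The Euclidean (`ℓ²`) norm of a finitely indexed vector. -/
def l2 {ι : Type*} [Fintype ι] (x : ι → 𝕜) : ℝ :=
  Real.sqrt (∑ i, ‖x i‖ ^ 2)

/-- The spectral (`ℓ² → ℓ²` operator) norm of a matrix. -/
def specNorm {ι κ : Type*} [Fintype ι] [Fintype κ] [DecidableEq κ]
    (M : Matrix ι κ 𝕜) : ℝ :=
  ‖LinearMap.toContinuousLinearMap (Matrix.toEuclideanLin M)‖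

/-- `x` is `s`-sparse: it has at most `s` nonzero entries. -/
def Sparse {ι : Type*} (s : ℕ) (x : ι → 𝕜) : Prop :=
  ∃ J : Finset ι, J.card ≤ s ∧ ∀ i, x i ≠ 0 → i ∈ J

/-- The `s`-restricted biorthogonality constant `θ_s(M)`: the smallest `δ ≥ 0` such that
`|⟨y, Mx⟩ − ⟨y, x⟩| ≤ δ‖x‖₂‖y‖₂` for all `x, y` supported on a common index set of
cardinality at most `s`. -/
def theta {ι : Type*} [Fintype ι] (s : ℕ) (M : Matrix ι ι 𝕜) : ℝ :=
  sInf {δ : ℝ | 0 ≤ δ ∧ ∀ J : Finset ι, J.card ≤ s →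
    ∀ x y : ι → 𝕜, (∀ i, x i ≠ 0 → i ∈ J) → (∀ i, y i ≠ 0 → i ∈ J) →
      ‖star y ⬝ᵥ M.mulVec x - star y ⬝ᵥ x‖ ≤ δ * l2 x * l2 y}

/-- The `s`-restricted isometry constant `δ_s(Ψ)`. -/
def ric {ι κ : Type*} [Fintype ι] [Fintype κ] (s : ℕ) (Ψ : Matrix ι κ 𝕜) : ℝ :=
  sInf {δ : ℝ | 0 ≤ δ ∧ ∀ x : κ → 𝕜, Sparse s x →
    (1 - δ) * l2 x ^ 2 ≤ l2 (Ψ.mulVec x) ^ 2 ∧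
      l2 (Ψ.mulVec x) ^ 2 ≤ (1 + δ) * l2 x ^ 2}

/-- Coordinate projection `Π_J`: keep the entries indexed by `J`, zero out the others. -/
def proj {ι : Type*} [DecidableEq ι] (J : Finset ι) (x : ι → 𝕜) : ι → 𝕜 :=
  fun i => if i ∈ J then x i else 0

/-- The column submatrix `Ψ_J` of `Ψ` formed by the columns indexed by `J`. -/
def cols {ι κ : Type*} (Ψ : Matrix ι κ 𝕜) (J : Finset κ) :
    Matrix ι {j // j ∈ J} 𝕜 :=
  Ψ.submatrix id fun j => (j : κ)

/-- The `j`-th column of `Ψ`. -/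
def col {ι κ : Type*} (Ψ : Matrix ι κ 𝕜) (j : κ) : ι → 𝕜 :=
  fun i => Ψ i j

/-- The complementary oblique projector `E = I − Ψ_J (Ψ̃_J^* Ψ_J)⁻¹ Ψ̃_J^*`
(equal to `I` when `J = ∅`). -/
def obliqueE {ι κ : Type*} [Fintype ι] [DecidableEq ι] [DecidableEq κ]
    (Ψ Ψt : Matrix ι κ 𝕜) (J : Finset κ) : Matrix ι ι 𝕜 :=
  1 - cols Ψ J * ((cols Ψt J)ᴴ * cols Ψ J)⁻¹ * (cols Ψt J)ᴴ

/-- The smallest (real) eigenvalue of a matrix. -/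
def lamMin {ι : Type*} [Fintype ι] (G : Matrix ι ι 𝕜) : ℝ :=
  sInf {r : ℝ | ∃ v : ι → 𝕜, v ≠ 0 ∧ G.mulVec v = (r : 𝕜) • v}

/-- The `j`-th largest singular value (1-indexed) of a matrix, characterized via the
Eckart–Young–Mirsky theorem: `σ_j(A) = min { ‖A − B‖ : rank B < j }` where `‖·‖` is the
spectral norm. -/
def singVal {ι κ : Type*} [Fintype ι] [Fintype κ] [DecidableEq κ]
    (A : Matrix ι κ 𝕜) (j : ℕ) : ℝ :=
  sInf {r : ℝ | ∃ B : Matrix ι κ 𝕜, B.rank < j ∧ r = specNorm (A - B)}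

-- helpers
open scoped Matrix.Norms.L2Operator

section Helpers

variable {ι κ : Type*} [Fintype ι] [Fintype κ]

lemma l2_eq_norm (x : ι → 𝕜) : l2 x = ‖(WithLp.equiv 2 (ι → 𝕜)).symm x‖ := by
  rw [l2, EuclideanSpace.norm_eq]; rfl

lemma specNorm_eq [DecidableEq κ] (M : Matrix ι κ 𝕜) : specNorm M = ‖M‖ := rfl

lemma l2_nonneg (x : ι → 𝕜) : 0 ≤ l2 x := Real.sqrt_nonneg _

lemma l2_zero : l2 (0 : ι → 𝕜) = 0 := by simp [l2]

lemma l2_eq_zero_iff {x : ι → 𝕜} : l2 x = 0 ↔ x = 0 := by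
  rw [l2_eq_norm, norm_eq_zero]
  constructor
  · intro h; funext i; exact congrFun (congrArg (WithLp.equiv 2 (ι → 𝕜)) h) i
  · rintro rfl; rfl

lemma l2_pos {x : ι → 𝕜} (hx : x ≠ 0) : 0 < l2 x :=
  lt_of_le_of_ne (l2_nonneg x) (fun h => hx (l2_eq_zero_iff.mp h.symm))

lemma inner_eq_dot (x y : ι → 𝕜) :
    (inner 𝕜 ((WithLp.equiv 2 (ι → 𝕜)).symm y) ((WithLp.equiv 2 (ι → 𝕜)).symm x) : 𝕜)
      = star y ⬝ᵥ x := by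
  simp [PiLp.inner_apply, dotProduct, RCLike.inner_apply, RCLike.star_def, mul_comm]

lemma cauchy (x y : ι → 𝕜) : ‖star y ⬝ᵥ x‖ ≤ l2 y * l2 x := by
  rw [← inner_eq_dot, l2_eq_norm, l2_eq_norm]
  exact norm_inner_le_norm _ _

lemma l2_mulVec_le [DecidableEq κ] (M : Matrix ι κ 𝕜) (x : κ → 𝕜) :
    l2 (M.mulVec x) ≤ specNorm M * l2 x := by
  rw [l2_eq_norm, l2_eq_norm, specNorm_eq]
  exact M.l2_opNorm_mulVec ((WithLp.equiv 2 (κ → 𝕜)).symm x)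

lemma theta_spec [DecidableEq ι] (s : ℕ) (M : Matrix ι ι 𝕜)
    (J : Finset ι) (hJ : J.card ≤ s) (x y : ι → 𝕜)
    (hx : ∀ i, x i ≠ 0 → i ∈ J) (hy : ∀ i, y i ≠ 0 → i ∈ J) :
    ‖star y ⬝ᵥ M.mulVec x - star y ⬝ᵥ x‖ ≤ theta s M * l2 x * l2 y := by
  set S := {δ : ℝ | 0 ≤ δ ∧ ∀ J : Finset ι, J.card ≤ s →
    ∀ x y : ι → 𝕜, (∀ i, x i ≠ 0 → i ∈ J) → (∀ i, y i ≠ 0 → i ∈ J) →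
      ‖star y ⬝ᵥ M.mulVec x - star y ⬝ᵥ x‖ ≤ δ * l2 x * l2 y} with hS
  have hmem : specNorm (M - 1) ∈ S := by
    constructor
    · rw [specNorm_eq]; exact norm_nonneg _
    · intro J' _ x' y' _ _
      have h1 : star y' ⬝ᵥ M.mulVec x' - star y' ⬝ᵥ x' = star y' ⬝ᵥ ((M - 1).mulVec x') := by
        rw [Matrix.sub_mulVec, Matrix.one_mulVec, dotProduct_sub]
      rw [h1]
      calc ‖star y' ⬝ᵥ ((M - 1).mulVec x')‖ ≤ l2 y' * l2 ((M - 1).mulVec x') := cauchy _ _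
        _ ≤ l2 y' * (specNorm (M - 1) * l2 x') := by
            exact mul_le_mul_of_nonneg_left (l2_mulVec_le _ _) (l2_nonneg _)
        _ = specNorm (M - 1) * l2 x' * l2 y' := by ring
  have hne : S.Nonempty := ⟨_, hmem⟩
  have hbdd : BddBelow S := ⟨0, fun δ hδ => hδ.1⟩
  rcases eq_or_ne x 0 with rfl | hx0
  · simp [l2_zero]
  rcases eq_or_ne y 0 with rfl | hy0
  · simp [l2_zero]
  have hpx := l2_pos hx0
  have hpy := l2_pos hy0
  have hratio : ‖star y ⬝ᵥ M.mulVec x - star y ⬝ᵥ x‖ / (l2 x * l2 y) ≤ theta s M := by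
    refine le_csInf hne fun δ hδ => ?_
    rw [div_le_iff₀ (by positivity)]
    calc ‖star y ⬝ᵥ M.mulVec x - star y ⬝ᵥ x‖ ≤ δ * l2 x * l2 y := hδ.2 J hJ x y hx hy
      _ = δ * (l2 x * l2 y) := by ring
  rw [div_le_iff₀ (by positivity)] at hratio
  calc ‖star y ⬝ᵥ M.mulVec x - star y ⬝ᵥ x‖ ≤ theta s M * (l2 x * l2 y) := hratio
    _ = theta s M * l2 x * l2 y := by ring

variable [DecidableEq κ]

/-- Extension of a vector supported on `J` to the full index set. -/
def extJ (J : Finset κ) (v : {j // j ∈ J} → 𝕜) : κ → 𝕜 :=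
  fun i => if h : i ∈ J then v ⟨i, h⟩ else 0

lemma extJ_supp (J : Finset κ) (v : {j // j ∈ J} → 𝕜) :
    ∀ i, extJ J v i ≠ 0 → i ∈ J := by
  intro i hi
  by_contra h
  exact hi (dif_neg h)

lemma extJ_coe (J : Finset κ) (v : {j // j ∈ J} → 𝕜) (j : {j // j ∈ J}) :
    extJ J v (j : κ) = v j := by
  simp [extJ]

lemma sum_of_supp {M : Type*} [AddCommMonoid M] (J : Finset κ) (F : κ → M)
    (h : ∀ i ∉ J, F i = 0) : (∑ i, F i) = ∑ j : {j // j ∈ J}, F (j : κ) := by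
  rw [Finset.sum_coe_sort J F]
  exact (Finset.sum_subset (Finset.subset_univ J) (fun i _ hi => h i hi)).symm

lemma l2_extJ (J : Finset κ) (v : {j // j ∈ J} → 𝕜) : l2 (extJ J v) = l2 v := by
  unfold l2
  congr 1
  rw [sum_of_supp J (fun i => ‖extJ J v i‖ ^ 2) (fun i hi => by simp [extJ, dif_neg hi])]
  exact Finset.sum_congr rfl fun j _ => by rw [extJ_coe]

lemma mulVec_extJ (Ψ : Matrix ι κ 𝕜) (J : Finset κ) (v : {j // j ∈ J} → 𝕜) :
    Ψ.mulVec (extJ J v) = (cols Ψ J).mulVec v := by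
  funext i
  unfold Matrix.mulVec dotProduct
  rw [sum_of_supp J (fun j => Ψ i j * extJ J v j) (fun j hj => by simp [extJ, dif_neg hj])]
  exact Finset.sum_congr rfl fun j _ => by rw [extJ_coe]; rfl

lemma dot_extJ (J : Finset κ) (v : {j // j ∈ J} → 𝕜) (z : κ → 𝕜) :
    star (extJ J v) ⬝ᵥ z = star v ⬝ᵥ (fun j => z (j : κ)) := by
  unfold dotProduct
  rw [sum_of_supp J (fun j => star (extJ J v) j * z j)
    (fun j hj => by simp [extJ, dif_neg hj])]
  exact Finset.sum_congr rfl fun j _ => by simp [extJ_coe]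

lemma colsH_mulVec (Ψt : Matrix ι κ 𝕜) (J : Finset κ) (w : ι → 𝕜) (j : {j // j ∈ J}) :
    ((cols Ψt J)ᴴ.mulVec w) j = (Ψtᴴ.mulVec w) (j : κ) := rfl

lemma norm_star_dot_self {ι' : Type*} [Fintype ι'] (v : ι' → 𝕜) :
    ‖star v ⬝ᵥ v‖ = l2 v ^ 2 := by
  have h : star v ⬝ᵥ v = ((∑ j, ‖v j‖ ^ 2 : ℝ) : 𝕜) := by
    unfold dotProduct
    push_cast
    exact Finset.sum_congr rfl fun j _ => by
      rw [Pi.star_apply, RCLike.star_def, RCLike.conj_mul]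
  rw [h, RCLike.norm_ofReal, abs_of_nonneg (by positivity), l2,
    Real.sq_sqrt (by positivity)]

end Helpers

/-- lower bound on the smallest singular value of `Ψ̃_J^* Ψ_J` and norm bound
on the oblique projector `Ψ_J(Ψ̃_J^* Ψ_J)⁻¹ Ψ̃_J^*`. -/
theorem statement5 (m n s : ℕ) (Ψ Ψt : Matrix (Fin m) (Fin n) 𝕜)
    (J : Finset (Fin n)) (hne : J.Nonempty) (hcard : J.card ≤ s)
    (hθ : theta s (Ψtᴴ * Ψ) < 1) :
    (∀ v : {j // j ∈ J} → 𝕜,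
        (1 - theta s (Ψtᴴ * Ψ)) * l2 v ≤ l2 (((cols Ψt J)ᴴ * cols Ψ J).mulVec v)) ∧
      0 < 1 - theta s (Ψtᴴ * Ψ) ∧
      IsUnit ((cols Ψt J)ᴴ * cols Ψ J).det ∧
      specNorm (cols Ψ J * ((cols Ψt J)ᴴ * cols Ψ J)⁻¹ * (cols Ψt J)ᴴ) ≤
        specNorm (cols Ψ J) * specNorm (cols Ψt J) / (1 - theta s (Ψtᴴ * Ψ)) := by
  set θ := theta s (Ψtᴴ * Ψ) with hθdef
  set G := (cols Ψt J)ᴴ * cols Ψ J with hGdef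
  have hpos : 0 < 1 - θ := by linarith
  have hGmul : ∀ (v : {j // j ∈ J} → 𝕜) (j : {j // j ∈ J}),
      (G.mulVec v) j = ((Ψtᴴ * Ψ).mulVec (extJ J v)) (j : Fin n) := by
    intro v j
    have h1 : G.mulVec v = (cols Ψt J)ᴴ.mulVec ((cols Ψ J).mulVec v) := by
      rw [Matrix.mulVec_mulVec]
    have h2 : (Ψtᴴ * Ψ).mulVec (extJ J v) = Ψtᴴ.mulVec (Ψ.mulVec (extJ J v)) := by
      rw [Matrix.mulVec_mulVec]
    rw [h1, h2, ← mulVec_extJ, colsH_mulVec]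
  have key : ∀ v : {j // j ∈ J} → 𝕜, (1 - θ) * l2 v ≤ l2 (G.mulVec v) := by
    intro v
    rcases eq_or_ne v 0 with rfl | hv
    · simp [Matrix.mulVec_zero, l2_zero]
    · have hsupp := extJ_supp J v
      have hts := theta_spec s (Ψtᴴ * Ψ) J hcard (extJ J v) (extJ J v) hsupp hsupp
      have hd1 : star (extJ J v) ⬝ᵥ (Ψtᴴ * Ψ).mulVec (extJ J v) = star v ⬝ᵥ G.mulVec v := by
        rw [dot_extJ]
        congr 1
        funext j
        exact (hGmul v j).symm
      have hd2 : star (extJ J v) ⬝ᵥ (extJ J v) = star v ⬝ᵥ v := by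
        rw [dot_extJ]
        congr 1
        funext j
        exact extJ_coe J v j
      rw [hd1, hd2, l2_extJ] at hts
      have hCS := cauchy (G.mulVec v) v
      have hself := norm_star_dot_self v
      have htri : ‖star v ⬝ᵥ v‖ ≤
          ‖star v ⬝ᵥ G.mulVec v‖ + ‖star v ⬝ᵥ G.mulVec v - star v ⬝ᵥ v‖ := by
        calc ‖star v ⬝ᵥ v‖
            = ‖star v ⬝ᵥ G.mulVec v - (star v ⬝ᵥ G.mulVec v - star v ⬝ᵥ v)‖ := by
              congr 1; ring
          _ ≤ _ := norm_sub_le _ _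
      have hp := l2_pos hv
      have hfin : (1 - θ) * l2 v * l2 v ≤ l2 (G.mulVec v) * l2 v := by nlinarith
      exact le_of_mul_le_mul_right hfin hp
  have hdet : IsUnit G.det := by
    rw [isUnit_iff_ne_zero]
    intro h
    obtain ⟨v, hv, hGv⟩ := Matrix.exists_mulVec_eq_zero_iff.mpr h
    have h1 := key v
    rw [hGv, l2_zero] at h1
    have h2 := l2_pos hv
    nlinarith
  refine ⟨key, hpos, hdet, ?_⟩
  have hGinvbd : ∀ u : {j // j ∈ J} → 𝕜, l2 (G⁻¹.mulVec u) ≤ (1 - θ)⁻¹ * l2 u := by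
    intro u
    have hGG : G.mulVec (G⁻¹.mulVec u) = u := by
      rw [Matrix.mulVec_mulVec, Matrix.mul_nonsing_inv _ hdet, Matrix.one_mulVec]
    have h1 := key (G⁻¹.mulVec u)
    rw [hGG] at h1
    have h2 := mul_le_mul_of_nonneg_left h1 (inv_pos.mpr hpos).le
    rwa [← mul_assoc, inv_mul_cancel₀ hpos.ne', one_mul] at h2
  have hGinvnorm : ‖G⁻¹‖ ≤ (1 - θ)⁻¹ := by
    rw [← specNorm_eq]
    refine ContinuousLinearMap.opNorm_le_bound _ (by positivity) fun x => ?_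
    have hx : (LinearMap.toContinuousLinearMap (Matrix.toEuclideanLin G⁻¹)) x
        = (WithLp.equiv 2 _).symm (G⁻¹.mulVec ((WithLp.equiv 2 _) x)) :=
      Matrix.toEuclideanLin_apply _ _
    have hx2 : ‖x‖ = l2 ((WithLp.equiv 2 _) x) := by rw [l2_eq_norm]; rfl
    rw [hx, ← l2_eq_norm, hx2]
    exact hGinvbd _
  calc specNorm (cols Ψ J * G⁻¹ * (cols Ψt J)ᴴ)
      = ‖cols Ψ J * G⁻¹ * (cols Ψt J)ᴴ‖ := specNorm_eq _
    _ ≤ ‖cols Ψ J * G⁻¹‖ * ‖(cols Ψt J)ᴴ‖ := Matrix.l2_opNorm_mul _ _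
    _ ≤ ‖cols Ψ J‖ * ‖G⁻¹‖ * ‖cols Ψt J‖ := by
        rw [Matrix.l2_opNorm_conjTranspose]
        exact mul_le_mul_of_nonneg_right (Matrix.l2_opNorm_mul _ _) (norm_nonneg _)
    _ ≤ specNorm (cols Ψ J) * specNorm (cols Ψt J) / (1 - θ) := by
        rw [specNorm_eq, specNorm_eq, div_eq_mul_inv]
        calc ‖cols Ψ J‖ * ‖G⁻¹‖ * ‖cols Ψt J‖
            = ‖cols Ψ J‖ * ‖cols Ψt J‖ * ‖G⁻¹‖ := by ring
          _ ≤ ‖cols Ψ J‖ * ‖cols Ψt J‖ * (1 - θ)⁻¹ :=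
              mul_le_mul_of_nonneg_left hGinvnorm (by positivity)

end ObliquePursuit
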